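/- Let V be a finite-dimensional normed complex vector space and A : V → V a linear endomorphism. Suppose S ⊆ V \ {0} is a subset that is connected in the norm topology, whose linear span equals all of V, and such that every v ∈ S is an eigenvector of A (i.e., A v ∈ ℂ·v). Then A is a scalar multiple of the identity. -/

import Mathlib

/-- If a connected (in the norm topology) spanning set of nonzero vectors of a
finite-dimensional normed complex vector space consists of eigenvectors of a
linear endomorphism `A`, then `A` is a scalar multiple of the identity. -/
theorem eq_smul_id_of_connected_spanning_eigenvectors
    (V : Type*) [NormedAddCommGroup V] [NormedSpace ℂ V] [FiniteDimensional ℂ V]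
    (A : V →ₗ[ℂ] V) (S : Set V)
    (hS0 : ∀ v ∈ S, v ≠ 0)
    (hconn : IsConnected S)
    (hspan : Submodule.span ℂ S = ⊤)
    (heig : ∀ v ∈ S, ∃ c : ℂ, A v = c • v) :
    ∃ c : ℂ, A = c • LinearMap.id := by
  obtain ⟨v₀, hv₀S⟩ := hconn.nonempty
  obtain ⟨c₀, hc₀⟩ := heig v₀ hv₀S
  refine ⟨c₀, ?_⟩
  -- view A as Module.End
  have hAcont : Continuous A := A.continuous_of_finiteDimensional
  -- set of "other" eigenvalues
  have hfin : Set.Finite (Module.End.HasEigenvalue (A : Module.End ℂ V)) :=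
    Module.End.finite_hasEigenvalue _
  set E : Set ℂ := (Module.End.HasEigenvalue (A : Module.End ℂ V)) \ {c₀} with hE
  have hEfin : E.Finite := hfin.diff
  -- the "bad" closed set
  set C : Set V := ⋃ μ ∈ E, {v : V | A v = μ • v} with hC
  have hCclosed : IsClosed C := by
    apply Set.Finite.isClosed_biUnion hEfin
    intro μ _
    have : {v : V | A v = μ • v} = (fun v => A v - μ • v) ⁻¹' {0} := by
      ext v; simp [sub_eq_zero]
    rw [this]
    exact IsClosed.preimage (hAcont.sub (continuous_const_smul μ)) isClosed_singleton
  -- work in the subtype S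
  have : ConnectedSpace S := Subtype.connectedSpace hconn
  set T : Set S := {x : S | A (x : V) = c₀ • (x : V)} with hT
  have hTclosed : IsClosed T := by
    have : T = (fun x : S => A (x : V) - c₀ • (x : V)) ⁻¹' {0} := by
      ext x; simp [hT, sub_eq_zero]
    rw [this]
    exact IsClosed.preimage ((hAcont.comp continuous_subtype_val).sub
      ((continuous_subtype_val).const_smul c₀)) isClosed_singleton
  have hTopen : IsOpen T := by
    have hTeq : T = (Subtype.val : S → V) ⁻¹' Cᶜ := by
      ext x
      obtain ⟨v, hvS⟩ := x
      simp only [hT, Set.mem_setOf_eq, Set.mem_preimage, Set.mem_compl_iff, hC,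
        Set.mem_iUnion]
      constructor
      · rintro h ⟨μ, hμE, hμv⟩
        have hne : μ ≠ c₀ := hμE.2
        have : (μ - c₀) • v = 0 := by
          rw [sub_smul, ← hμv, ← h, sub_self]
        rcases smul_eq_zero.mp this with h1 | h2
        · exact hne (sub_eq_zero.mp h1)
        · exact hS0 v hvS h2
      · intro h
        obtain ⟨c, hc⟩ := heig v hvS
        by_cases hcc : c = c₀
        · rwa [hcc] at hc
        · exfalso
          apply h
          refine ⟨c, ⟨?_, hcc⟩, hc⟩
          exact Module.End.hasEigenvalue_of_hasEigenvector
            ⟨Module.End.mem_eigenspace_iff.mpr hc, hS0 v hvS⟩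
    rw [hTeq]
    exact hCclosed.isOpen_compl.preimage continuous_subtype_val
  have hTne : T.Nonempty := ⟨⟨v₀, hv₀S⟩, hc₀⟩
  have hTuniv : T = Set.univ :=
    (isClopen_iff.mp ⟨hTclosed, hTopen⟩).resolve_left (Set.nonempty_iff_ne_empty.mp hTne)
  -- every v in S satisfies A v = c₀ • v
  have hall : ∀ v ∈ S, A v = c₀ • v := fun v hv => by
    have : (⟨v, hv⟩ : S) ∈ T := hTuniv ▸ Set.mem_univ _
    exact this
  exact LinearMap.ext_on hspan fun v hv => by simpa using hall v hv
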